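/- For every real δ with 0 < δ < 1/2, ∫_{δ}^{1/2} ∫_{1/2}^{1−δ} ( t·(1−s)/(t·s + (1−t)·(1−s)) )² · (1/t) · (1/(1−s)) dμ(t) dμ(s) ≤ 16/(3·π²), where dμ(t) = dt/(π·√(t·(1−t))). -/

import Mathlib

open MeasureTheory

namespace HFnL2Aux

open Real Set

noncomputable def gfun (t : ℝ) : ℝ := 1/(π * Real.sqrt (t*(1-t)) * (1-t))
noncomputable def hfun (s : ℝ) : ℝ := 1/(π * Real.sqrt (s*(1-s)) * s)

lemma denom_pos {t : ℝ} (h1 : 0 < t) (h2 : t < 1) :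
    0 < π * Real.sqrt (t*(1-t)) := by
  have h3 : 0 < Real.sqrt (t*(1-t)) := Real.sqrt_pos.2 (by nlinarith)
  have := Real.pi_pos
  positivity

lemma gfun_contOn {a b : ℝ} (ha : 0 < a) (hb : b < 1) :
    ContinuousOn gfun (Icc a b) := by
  apply ContinuousOn.div continuousOn_const
  · fun_prop
  · intro t ht
    have h1 : 0 < t := lt_of_lt_of_le ha ht.1
    have h2 : 0 < 1 - t := by have := ht.2; linarith
    have h3 : 0 < Real.sqrt (t*(1-t)) := Real.sqrt_pos.2 (by nlinarith)
    have h4 := Real.pi_pos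
    positivity

lemma hfun_contOn {a b : ℝ} (ha : 0 < a) (hb : b < 1) :
    ContinuousOn hfun (Icc a b) := by
  apply ContinuousOn.div continuousOn_const
  · fun_prop
  · intro t ht
    have h1 : 0 < t := lt_of_lt_of_le ha ht.1
    have h2 : 0 < 1 - t := by have := ht.2; linarith
    have h3 : 0 < Real.sqrt (t*(1-t)) := Real.sqrt_pos.2 (by nlinarith)
    have h4 := Real.pi_pos
    positivity

lemma gfun_deriv {t : ℝ} (h1 : 0 < t) (h2 : t < 1) :
    HasDerivAt (fun x : ℝ => (2/π) * Real.sqrt (x/(1-x))) (gfun t) t := by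
  have h2' : (0:ℝ) < 1 - t := by linarith
  have hu : HasDerivAt (fun x : ℝ => x/(1-x)) ((1*(1-t) - t*(-1))/(1-t)^2) t :=
    (hasDerivAt_id t).div ((hasDerivAt_id t).const_sub 1) (by linarith)
  have hq : 0 < t/(1-t) := by positivity
  have hs := (Real.hasDerivAt_sqrt (ne_of_gt hq)).comp t hu
  have key := hs.const_mul (2/π)
  refine key.congr_deriv ?_
  symm
  unfold gfun
  have hst : Real.sqrt (t*(1-t)) = Real.sqrt t * Real.sqrt (1-t) := Real.sqrt_mul (le_of_lt h1) _
  have hsd : Real.sqrt (t/(1-t)) = Real.sqrt t / Real.sqrt (1-t) := Real.sqrt_div (le_of_lt h1) _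
  rw [hst, hsd]
  set u := Real.sqrt t with hud
  set v := Real.sqrt (1-t) with hvd
  have hst' : 0 < u := Real.sqrt_pos.2 h1
  have hs2 : 0 < v := Real.sqrt_pos.2 h2'
  have e2 : (1:ℝ) - t = v^2 := (Real.sq_sqrt h2'.le).symm
  have hpi := Real.pi_pos
  rw [e2]
  field_simp
  linear_combination e2

lemma hfun_deriv {s : ℝ} (h1 : 0 < s) (h2 : s < 1) :
    HasDerivAt (fun x : ℝ => -((2/π) * Real.sqrt ((1-x)/x))) (hfun s) s := by
  have h2' : (0:ℝ) < 1 - s := by linarith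
  have hu : HasDerivAt (fun x : ℝ => (1-x)/x) (((-1)*s - (1-s)*1)/s^2) s :=
    ((hasDerivAt_id s).const_sub 1).div (hasDerivAt_id s) (ne_of_gt h1)
  have hq : 0 < (1-s)/s := by positivity
  have hsq := hu.sqrt (ne_of_gt hq)
  have key := (hsq.const_mul (2/π)).neg
  refine key.congr_deriv ?_
  symm
  unfold hfun
  have hst : Real.sqrt (s*(1-s)) = Real.sqrt s * Real.sqrt (1-s) := Real.sqrt_mul (le_of_lt h1) _
  have hsd : Real.sqrt ((1-s)/s) = Real.sqrt (1-s) / Real.sqrt s := Real.sqrt_div (le_of_lt h2') _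
  rw [hst, hsd]
  set u := Real.sqrt s with hud
  set v := Real.sqrt (1-s) with hvd
  have hst' : 0 < u := Real.sqrt_pos.2 h1
  have hs2 : 0 < v := Real.sqrt_pos.2 h2'
  have e2 : s = u^2 := (Real.sq_sqrt h1.le).symm
  have hpi := Real.pi_pos
  rw [e2]
  field_simp
  ring_nf

lemma gfun_integrable {δ : ℝ} (hδ : 0 < δ) (hδ' : δ < 1/2) :
    IntegrableOn gfun (Icc δ (1/2)) :=
  (gfun_contOn hδ (by norm_num)).integrableOn_compact isCompact_Icc

lemma hfun_integrable {δ : ℝ} (hδ : 0 < δ) (hδ' : δ < 1/2) :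
    IntegrableOn hfun (Icc (1/2) (1-δ)) :=
  (hfun_contOn (by norm_num) (by linarith)).integrableOn_compact isCompact_Icc

lemma gfun_integral_le {δ : ℝ} (hδ : 0 < δ) (hδ' : δ < 1/2) :
    ∫ t in Icc δ (1/2), gfun t ≤ 2/π := by
  have hle : δ ≤ (1:ℝ)/2 := hδ'.le
  have hval : ∫ t in δ..(1/2), gfun t
      = (2/π) * Real.sqrt ((1/2)/(1-1/2)) - (2/π) * Real.sqrt (δ/(1-δ)) := by
    have := intervalIntegral.integral_eq_sub_of_hasDerivAt
      (f := fun x : ℝ => (2/π) * Real.sqrt (x/(1-x))) (f' := gfun) (a := δ) (b := 1/2)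
      (fun t ht => by
        rw [Set.uIcc_of_le hle] at ht
        exact gfun_deriv (lt_of_lt_of_le hδ ht.1) (by have := ht.2; linarith))
      ((gfun_contOn hδ (by norm_num)).intervalIntegrable_of_Icc hle)
    simpa using this
  rw [integral_Icc_eq_integral_Ioc, ← intervalIntegral.integral_of_le hle, hval]
  have h1 : Real.sqrt ((1/2:ℝ)/(1-1/2)) = 1 := by norm_num
  have h2 : 0 ≤ Real.sqrt (δ/(1-δ)) := Real.sqrt_nonneg _
  have hpi := Real.pi_pos
  have h3 : 0 ≤ 2/π := by positivity
  rw [h1]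
  nlinarith

lemma hfun_integral_le {δ : ℝ} (hδ : 0 < δ) (hδ' : δ < 1/2) :
    ∫ s in Icc (1/2) (1-δ), hfun s ≤ 2/π := by
  have hle : (1:ℝ)/2 ≤ 1 - δ := by linarith
  have hval : ∫ s in (1/2)..(1-δ), hfun s
      = -((2/π) * Real.sqrt ((1-(1-δ))/(1-δ))) - -((2/π) * Real.sqrt ((1-1/2)/(1/2))) := by
    have := intervalIntegral.integral_eq_sub_of_hasDerivAt
      (f := fun x : ℝ => -((2/π) * Real.sqrt ((1-x)/x))) (f' := hfun) (a := 1/2) (b := 1-δ)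
      (fun s hs => by
        rw [Set.uIcc_of_le hle] at hs
        exact hfun_deriv (by have := hs.1; linarith) (by have := hs.2; linarith))
      ((hfun_contOn (by norm_num) (by linarith)).intervalIntegrable_of_Icc hle)
    simpa using this
  rw [integral_Icc_eq_integral_Ioc, ← intervalIntegral.integral_of_le hle, hval]
  have h1 : Real.sqrt ((1-(1/2:ℝ))/(1/2)) = 1 := by norm_num
  have h2 : 0 ≤ Real.sqrt ((1-(1-δ))/(1-δ)) := Real.sqrt_nonneg _
  have hpi := Real.pi_pos
  have h3 : 0 ≤ 2/π := by positivity
  rw [h1]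
  nlinarith

lemma hfun_nonneg (s : ℝ) : 0 ≤ hfun s := by
  unfold hfun
  have hpi := Real.pi_pos
  have hsq := Real.sqrt_nonneg (s*(1-s))
  rcases le_or_gt s 0 with h | h
  · have hz : Real.sqrt (s*(1-s)) = 0 := by
      rw [Real.sqrt_eq_zero']
      nlinarith
    simp [hz]
  · apply div_nonneg (by norm_num)
    positivity

/-- pointwise bound -/
lemma pointwise_bound {δ t s : ℝ} (hδ : 0 < δ) (hδ' : δ < 1/2)
    (ht : t ∈ Icc δ (1/2:ℝ)) (hs : s ∈ Icc (1/2:ℝ) (1-δ)) :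
    |(t * (1 - s) / (t * s + (1 - t) * (1 - s))) ^ 2 * (1 / t) * (1 / (1 - s))
          * (1 / (π * Real.sqrt (t * (1 - t))))
          * (1 / (π * Real.sqrt (s * (1 - s))))| ≤ gfun t * hfun s := by
  have ht1 : 0 < t := lt_of_lt_of_le hδ ht.1
  have ht2 : 0 < 1 - t := by have := ht.2; linarith
  have hs1 : 0 < s := by have := hs.1; linarith
  have hs2 : 0 < 1 - s := by have := hs.2; linarith
  have hD : 0 < t * s + (1 - t) * (1 - s) := by positivity
  have hwt : 0 < π * Real.sqrt (t*(1-t)) := denom_pos ht1 (by linarith)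
  have hws : 0 < π * Real.sqrt (s*(1-s)) := denom_pos hs1 (by linarith)
  have habs : |(t * (1 - s) / (t * s + (1 - t) * (1 - s))) ^ 2 * (1 / t) * (1 / (1 - s))
          * (1 / (π * Real.sqrt (t * (1 - t))))
          * (1 / (π * Real.sqrt (s * (1 - s))))|
      = (t * (1 - s) / (t * s + (1 - t) * (1 - s))) ^ 2 * (1 / t) * (1 / (1 - s))
          * (1 / (π * Real.sqrt (t * (1 - t))))
          * (1 / (π * Real.sqrt (s * (1 - s)))) := by
    apply abs_of_nonneg; positivity
  rw [habs]
  unfold gfun hfun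
  have hA : (t * (1 - s) / (t * s + (1 - t) * (1 - s))) ^ 2 ≤ t * (1-s) / (s * (1-t)) := by
    rw [div_pow, div_le_div_iff₀ (by positivity) (by positivity)]
    nlinarith [mul_nonneg (mul_nonneg ht1.le hs2.le) (sq_nonneg (t*s - (1-t)*(1-s))),
      mul_nonneg (mul_nonneg (mul_nonneg (mul_nonneg (sq_nonneg t) hs1.le) ht2.le) hs2.le) hs2.le]
  have key : (t * (1 - s) / (t * s + (1 - t) * (1 - s))) ^ 2 * (1 / t) * (1 / (1 - s))
      ≤ 1 / (s * (1-t)) := by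
    calc (t * (1 - s) / (t * s + (1 - t) * (1 - s))) ^ 2 * (1 / t) * (1 / (1 - s))
        ≤ (t * (1-s) / (s * (1-t))) * (1 / t) * (1 / (1 - s)) := by
          apply mul_le_mul_of_nonneg_right _ (by positivity)
          exact mul_le_mul_of_nonneg_right hA (by positivity)
      _ = 1 / (s * (1-t)) := by field_simp
  calc (t * (1 - s) / (t * s + (1 - t) * (1 - s))) ^ 2 * (1 / t) * (1 / (1 - s))
          * (1 / (π * Real.sqrt (t * (1 - t))))
          * (1 / (π * Real.sqrt (s * (1 - s))))
      ≤ (1 / (s * (1-t))) * (1 / (π * Real.sqrt (t * (1 - t))))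
          * (1 / (π * Real.sqrt (s * (1 - s)))) := by
        apply mul_le_mul_of_nonneg_right _ (by positivity)
        exact mul_le_mul_of_nonneg_right key (by positivity)
    _ = 1/(π * Real.sqrt (t*(1-t)) * (1-t)) * (1/(π * Real.sqrt (s*(1-s)) * s)) := by
        field_simp

end HFnL2Aux

open HFnL2Aux in

/-- For `0 < δ < 1/2`,
`∫_{δ}^{1/2} ∫_{1/2}^{1−δ} (t(1−s)/(ts+(1−t)(1−s)))² · t⁻¹ (1−s)⁻¹ dμ(t) dμ(s)
  ≤ 16/(3π²)`, where `dμ(t) = dt/(π√(t(1−t)))`. -/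
theorem h_function_L2_bound (δ : ℝ) (hδ : 0 < δ) (hδ' : δ < 1 / 2) :
    ∫ s in Set.Icc (1 / 2 : ℝ) (1 - δ), ∫ t in Set.Icc δ (1 / 2 : ℝ),
        (t * (1 - s) / (t * s + (1 - t) * (1 - s))) ^ 2 * (1 / t) * (1 / (1 - s))
          * (1 / (Real.pi * Real.sqrt (t * (1 - t))))
          * (1 / (Real.pi * Real.sqrt (s * (1 - s))))
      ≤ 16 / (3 * Real.pi ^ 2) := by
  have hpi := Real.pi_pos
  set f : ℝ → ℝ → ℝ := fun s t =>
        (t * (1 - s) / (t * s + (1 - t) * (1 - s))) ^ 2 * (1 / t) * (1 / (1 - s))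
          * (1 / (Real.pi * Real.sqrt (t * (1 - t))))
          * (1 / (Real.pi * Real.sqrt (s * (1 - s)))) with hf
  have hIg := gfun_integral_le hδ hδ'
  have hIh := hfun_integral_le hδ hδ'
  have hIg0 : 0 ≤ ∫ t in Set.Icc δ (1/2), gfun t :=
    setIntegral_nonneg measurableSet_Icc (fun t ht => by
      have h1 : 0 < t := lt_of_lt_of_le hδ ht.1
      have h2 : 0 < 1 - t := by have := ht.2; linarith
      have h3 : 0 < Real.sqrt (t*(1-t)) := Real.sqrt_pos.2 (by nlinarith)
      unfold gfun; positivity)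
  -- inner bound: for each s in the outer set
  have inner_bound : ∀ s ∈ Set.Icc (1/2:ℝ) (1-δ),
      |∫ t in Set.Icc δ (1/2:ℝ), f s t| ≤ hfun s * (2/Real.pi) := by
    intro s hs
    have hb : ∀ᵐ t ∂(volume.restrict (Set.Icc δ (1/2:ℝ))), ‖f s t‖ ≤ gfun t * hfun s := by
      rw [ae_restrict_iff' measurableSet_Icc]
      exact ae_of_all _ fun t ht => pointwise_bound hδ hδ' ht hs
    have hint : Integrable (fun t => gfun t * hfun s) (volume.restrict (Set.Icc δ (1/2:ℝ))) :=
      (gfun_integrable hδ hδ').mul_const _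
    calc |∫ t in Set.Icc δ (1/2:ℝ), f s t|
        ≤ ∫ t in Set.Icc δ (1/2:ℝ), gfun t * hfun s :=
          norm_integral_le_of_norm_le hint hb
      _ = (∫ t in Set.Icc δ (1/2:ℝ), gfun t) * hfun s := by
          rw [integral_mul_const]
      _ ≤ (2/Real.pi) * hfun s := mul_le_mul_of_nonneg_right hIg (hfun_nonneg s)
      _ = hfun s * (2/Real.pi) := by ring
  have houter : Integrable (fun s => hfun s * (2/Real.pi))
      (volume.restrict (Set.Icc (1/2:ℝ) (1-δ))) :=
    (hfun_integrable hδ hδ').mul_const _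
  have hb2 : ∀ᵐ s ∂(volume.restrict (Set.Icc (1/2:ℝ) (1-δ))),
      ‖∫ t in Set.Icc δ (1/2:ℝ), f s t‖ ≤ hfun s * (2/Real.pi) := by
    rw [ae_restrict_iff' measurableSet_Icc]
    exact ae_of_all _ fun s hs => inner_bound s hs
  calc ∫ s in Set.Icc (1/2:ℝ) (1-δ), ∫ t in Set.Icc δ (1/2:ℝ), f s t
      ≤ ‖∫ s in Set.Icc (1/2:ℝ) (1-δ), ∫ t in Set.Icc δ (1/2:ℝ), f s t‖ := le_abs_self _
    _ ≤ ∫ s in Set.Icc (1/2:ℝ) (1-δ), hfun s * (2/Real.pi) :=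
        norm_integral_le_of_norm_le houter hb2
    _ = (∫ s in Set.Icc (1/2:ℝ) (1-δ), hfun s) * (2/Real.pi) := by rw [integral_mul_const]
    _ ≤ (2/Real.pi) * (2/Real.pi) :=
        mul_le_mul_of_nonneg_right hIh (by positivity)
    _ ≤ 16 / (3 * Real.pi ^ 2) := by
        rw [div_mul_div_comm, div_le_div_iff₀ (by positivity) (by positivity)]
        nlinarith
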